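/- Let Ψ be a 3×3 real matrix with nonnegative entries that is irreducible, let λ* > 0, and suppose the diagonal entries satisfy Ψ_{ii} < λ* for i = 1,2,3. Then the spectral radius of Ψ satisfies ρ(Ψ) < λ* if and only if det(λ*·I₃ − Ψ) > 0. -/

import Mathlib

lemma my_eval_charpoly {R : Type*} [CommRing R] {n : Type*} [Fintype n] [DecidableEq n]
    (M : Matrix n n R) (r : R) :
    M.charpoly.eval r = (r • (1 : Matrix n n R) - M).det := by
  rw [Matrix.charpoly, ← Polynomial.coe_evalRingHom, RingHom.map_det]
  congr 1
  ext i j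
  by_cases h : i = j
  · subst h
    simp [Matrix.charmatrix_apply_eq, Matrix.smul_apply, Matrix.one_apply]
  · simp [Matrix.charmatrix_apply_ne _ _ _ h, Matrix.one_apply_ne h, Matrix.smul_apply,
      Matrix.sub_apply]


/-- The spectral radius of a real square matrix: the maximum modulus of the complex
roots of its characteristic polynomial. -/
noncomputable def specRad {n : ℕ} (M : Matrix (Fin n) (Fin n) ℝ) : ℝ :=
  sSup {x : ℝ | ∃ z ∈ (M.map (Complex.ofReal : ℝ → ℂ)).charpoly.roots, ‖z‖ = x}

/-- For a nonnegative irreducible 3×3 matrix `Ψ` with diagonal entries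
below `λ* > 0`, one has `ρ(Ψ) < λ*` if and only if `det(λ*·I₃ − Ψ) > 0`. -/
theorem stmt_6 (Ψ : Matrix (Fin 3) (Fin 3) ℝ)
    (h_nonneg : ∀ i j, 0 ≤ Ψ i j)
    (h_irr : ∀ i j, ∃ k : ℕ, 0 < k ∧ 0 < (Ψ ^ k) i j)
    (lamStar : ℝ) (hlam : 0 < lamStar) (hdiag : ∀ i, Ψ i i < lamStar) :
    specRad Ψ < lamStar ↔ 0 < (lamStar • (1 : Matrix (Fin 3) (Fin 3) ℝ) - Ψ).det := by
  classical
  set Mc : Matrix (Fin 3) (Fin 3) ℂ := Ψ.map (Complex.ofReal : ℝ → ℂ) with hMc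
  set P : Polynomial ℂ := Mc.charpoly with hPdef
  have hPmap : P = Ψ.charpoly.map (Complex.ofRealHom : ℝ →+* ℂ) := by
    rw [hPdef, hMc]
    exact Matrix.charpoly_map Ψ Complex.ofRealHom
  have hmonic : P.Monic := Matrix.charpoly_monic Mc
  have hPne : P ≠ 0 := hmonic.ne_zero
  have hdeg : P.natDegree = 3 := by
    rw [hPdef, Matrix.charpoly_natDegree_eq_dim, Fintype.card_fin]
  have hcard : Multiset.card P.roots = 3 := by
    rw [← hdeg]
    exact (Polynomial.splits_iff_card_roots.mp (IsAlgClosed.splits P))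
  have hrne : P.roots ≠ 0 := by
    intro h
    rw [h] at hcard
    simp at hcard
  -- reduce specRad to roots
  have hspec : specRad Ψ < lamStar ↔ ∀ z ∈ P.roots, ‖z‖ < lamStar := by
    have hSF : {x : ℝ | ∃ z ∈ P.roots, ‖z‖ = x}
        = ↑((P.roots.map (‖·‖)).toFinset) := by
      ext x
      simp [eq_comm]
    have hFne : ((P.roots.map (‖·‖)).toFinset).Nonempty := by
      rw [Finset.nonempty_iff_ne_empty]
      intro h
      exact hrne (Multiset.map_eq_zero.mp (Multiset.toFinset_eq_empty.mp h))
    show sSup {x : ℝ | ∃ z ∈ P.roots, ‖z‖ = x} < lamStar ↔ _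
    rw [hSF, hFne.csSup_eq_max', Finset.max'_lt_iff]
    constructor
    · intro h z hz
      exact h _ (Multiset.mem_toFinset.mpr (Multiset.mem_map_of_mem _ hz))
    · intro h y hy
      obtain ⟨z, hz, rfl⟩ := Multiset.mem_map.mp (Multiset.mem_toFinset.mp hy)
      exact h z hz
  have hdetval : (lamStar • (1 : Matrix (Fin 3) (Fin 3) ℝ) - Ψ).det
      = Ψ.charpoly.eval lamStar := (my_eval_charpoly Ψ lamStar).symm
  rw [hspec, hdetval]
  constructor
  · -- forward
    intro hroots
    by_contra hle
    push_neg at hle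
    have hpmon : Ψ.charpoly.Monic := Matrix.charpoly_monic Ψ
    have hpdeg : Ψ.charpoly.natDegree = 3 := by
      rw [Matrix.charpoly_natDegree_eq_dim, Fintype.card_fin]
    have htop : Filter.Tendsto (fun x : ℝ => Ψ.charpoly.eval x) Filter.atTop Filter.atTop := by
      apply Polynomial.tendsto_atTop_of_leadingCoeff_nonneg
      · rw [Polynomial.degree_eq_natDegree hpmon.ne_zero, hpdeg]
        decide
      · rw [hpmon.leadingCoeff]
        norm_num
    obtain ⟨b, hb1, hb2⟩ := ((htop.eventually_ge_atTop 1).and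
      (Filter.eventually_ge_atTop lamStar)).exists
    have hc : ContinuousOn (fun x : ℝ => Ψ.charpoly.eval x) (Set.Icc lamStar b) :=
      (Polynomial.continuous Ψ.charpoly).continuousOn
    have h0mem : (0 : ℝ) ∈ Set.Icc (Ψ.charpoly.eval lamStar) (Ψ.charpoly.eval b) :=
      ⟨hle, by linarith⟩
    obtain ⟨r, hrmem, hr0⟩ := intermediate_value_Icc hb2 hc h0mem
    have hrroot : (r : ℂ) ∈ P.roots := by
      rw [Polynomial.mem_roots hPne]
      show P.eval (r : ℂ) = 0
      have : P.eval (r : ℂ) = ((Ψ.charpoly.eval r : ℝ) : ℂ) := by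
        rw [hPmap, Polynomial.eval_map]
        exact Polynomial.eval₂_at_apply Complex.ofRealHom r
      rw [this]
      simp only at hr0
      rw [hr0]
      norm_num
    have habs := hroots _ hrroot
    rw [Complex.norm_real, Real.norm_eq_abs] at habs
    have hr1 : lamStar ≤ r := hrmem.1
    rw [abs_of_nonneg (by linarith)] at habs
    linarith
  · -- backward
    intro hdet z hz
    by_contra habs
    push_neg at habs
    -- eigenvector for z
    have hdet0 : (z • (1 : Matrix (Fin 3) (Fin 3) ℂ) - Mc).det = 0 := by
      rw [← my_eval_charpoly Mc z]
      exact (Polynomial.mem_roots hPne).mp hz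
    obtain ⟨x, hx0, hxe⟩ := Matrix.exists_mulVec_eq_zero_iff.mpr hdet0
    have heq : ∀ i, z * x i = (Ψ i 0 : ℂ) * x 0 + (Ψ i 1 : ℂ) * x 1 + (Ψ i 2 : ℂ) * x 2 := by
      intro i
      have h := congrFun hxe i
      simp only [Matrix.mulVec, dotProduct, Fin.sum_univ_three, Matrix.sub_apply,
        Matrix.smul_apply, Matrix.one_apply, Matrix.map_apply, smul_eq_mul,
        Pi.zero_apply, hMc] at h
      fin_cases i <;> simp at h ⊢ <;> linear_combination h
    set u : Fin 3 → ℝ := fun i => ‖x i‖ with hu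
    have hun : ∀ i, 0 ≤ u i := fun i => norm_nonneg (x i)
    have hineq : ∀ i, lamStar * u i ≤ Ψ i 0 * u 0 + Ψ i 1 * u 1 + Ψ i 2 * u 2 := by
      intro i
      have h1 : ‖z * x i‖ = ‖z‖ * u i := by
        simp [hu, map_mul]
      have t0 : ‖(Ψ i 0 : ℂ) * x 0‖ = Ψ i 0 * u 0 := by
        simp [hu, map_mul, Complex.norm_real, Real.norm_eq_abs, abs_of_nonneg (h_nonneg i 0)]
      have t1 : ‖(Ψ i 1 : ℂ) * x 1‖ = Ψ i 1 * u 1 := by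
        simp [hu, map_mul, Complex.norm_real, Real.norm_eq_abs, abs_of_nonneg (h_nonneg i 1)]
      have t2 : ‖(Ψ i 2 : ℂ) * x 2‖ = Ψ i 2 * u 2 := by
        simp [hu, map_mul, Complex.norm_real, Real.norm_eq_abs, abs_of_nonneg (h_nonneg i 2)]
      have h2 : ‖(Ψ i 0 : ℂ) * x 0 + (Ψ i 1 : ℂ) * x 1 + (Ψ i 2 : ℂ) * x 2‖
          ≤ Ψ i 0 * u 0 + Ψ i 1 * u 1 + Ψ i 2 * u 2 := by
        calc ‖(Ψ i 0 : ℂ) * x 0 + (Ψ i 1 : ℂ) * x 1 + (Ψ i 2 : ℂ) * x 2‖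
            ≤ ‖(Ψ i 0 : ℂ) * x 0 + (Ψ i 1 : ℂ) * x 1‖
              + ‖(Ψ i 2 : ℂ) * x 2‖ := norm_add_le _ _
          _ ≤ ‖(Ψ i 0 : ℂ) * x 0‖ + ‖(Ψ i 1 : ℂ) * x 1‖
              + ‖(Ψ i 2 : ℂ) * x 2‖ := by
                have := norm_add_le ((Ψ i 0 : ℂ) * x 0) ((Ψ i 1 : ℂ) * x 1)
                linarith
          _ = Ψ i 0 * u 0 + Ψ i 1 * u 1 + Ψ i 2 * u 2 := by rw [t0, t1, t2]
      calc lamStar * u i ≤ ‖z‖ * u i :=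
            mul_le_mul_of_nonneg_right habs (hun i)
        _ = ‖z * x i‖ := h1.symm
        _ = ‖(Ψ i 0 : ℂ) * x 0 + (Ψ i 1 : ℂ) * x 1 + (Ψ i 2 : ℂ) * x 2‖ := by
              rw [heq i]
        _ ≤ _ := h2
    -- scalar setup
    have hE : Ψ.charpoly.eval lamStar =
        (lamStar - Ψ 0 0) * ((lamStar - Ψ 1 1) * (lamStar - Ψ 2 2) - Ψ 1 2 * Ψ 2 1)
        - Ψ 0 1 * (Ψ 1 0 * (lamStar - Ψ 2 2) + Ψ 1 2 * Ψ 2 0)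
        - Ψ 0 2 * (Ψ 1 0 * Ψ 2 1 + (lamStar - Ψ 1 1) * Ψ 2 0) := by
      rw [my_eval_charpoly, Matrix.det_fin_three]
      simp only [Matrix.sub_apply, Matrix.smul_apply, Matrix.one_apply, smul_eq_mul,
        Fin.isValue, show (0:Fin 3) ≠ 1 by decide, show (0:Fin 3) ≠ 2 by decide,
        show (1:Fin 3) ≠ 0 by decide, show (1:Fin 3) ≠ 2 by decide,
        show (2:Fin 3) ≠ 0 by decide, show (2:Fin 3) ≠ 1 by decide,
        ite_true, ite_false, mul_one, mul_zero]
      ring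
    rw [hE] at hdet
    have hp0 : 0 < lamStar - Ψ 0 0 := by have := hdiag 0; linarith
    have hp1 : 0 < lamStar - Ψ 1 1 := by have := hdiag 1; linarith
    have hp2 : 0 < lamStar - Ψ 2 2 := by have := hdiag 2; linarith
    have hw0 := hineq 0
    have hw1 := hineq 1
    have hw2 := hineq 2
    -- 2x2 principal minors are positive
    have hm0 : 0 < (lamStar - Ψ 1 1) * (lamStar - Ψ 2 2) - Ψ 1 2 * Ψ 2 1 := by
      by_contra h
      push_neg at h
      nlinarith [mul_nonneg (mul_nonneg (h_nonneg 0 1) (h_nonneg 1 0)) hp2.le,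
        mul_nonneg (mul_nonneg (h_nonneg 0 1) (h_nonneg 1 2)) (h_nonneg 2 0),
        mul_nonneg (mul_nonneg (h_nonneg 0 2) (h_nonneg 1 0)) (h_nonneg 2 1),
        mul_nonneg (mul_nonneg (h_nonneg 0 2) (h_nonneg 2 0)) hp1.le,
        mul_nonneg hp0.le (neg_nonneg.mpr h)]
    have hm1 : 0 < (lamStar - Ψ 0 0) * (lamStar - Ψ 2 2) - Ψ 0 2 * Ψ 2 0 := by
      by_contra h
      push_neg at h
      nlinarith [mul_nonneg (mul_nonneg (h_nonneg 1 2) (h_nonneg 2 1)) hp0.le,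
        mul_nonneg (mul_nonneg (h_nonneg 0 1) (h_nonneg 1 2)) (h_nonneg 2 0),
        mul_nonneg (mul_nonneg (h_nonneg 0 2) (h_nonneg 1 0)) (h_nonneg 2 1),
        mul_nonneg (mul_nonneg (h_nonneg 0 1) (h_nonneg 1 0)) hp2.le,
        mul_nonneg hp1.le (neg_nonneg.mpr h)]
    have hm2 : 0 < (lamStar - Ψ 0 0) * (lamStar - Ψ 1 1) - Ψ 0 1 * Ψ 1 0 := by
      by_contra h
      push_neg at h
      nlinarith [mul_nonneg (mul_nonneg (h_nonneg 1 2) (h_nonneg 2 1)) hp0.le,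
        mul_nonneg (mul_nonneg (h_nonneg 0 1) (h_nonneg 1 2)) (h_nonneg 2 0),
        mul_nonneg (mul_nonneg (h_nonneg 0 2) (h_nonneg 1 0)) (h_nonneg 2 1),
        mul_nonneg (mul_nonneg (h_nonneg 0 2) (h_nonneg 2 0)) hp1.le,
        mul_nonneg hp2.le (neg_nonneg.mpr h)]
    -- slack variables
    have hs0 : 0 ≤ Ψ 0 0 * u 0 + Ψ 0 1 * u 1 + Ψ 0 2 * u 2 - lamStar * u 0 := by linarith
    have hs1 : 0 ≤ Ψ 1 0 * u 0 + Ψ 1 1 * u 1 + Ψ 1 2 * u 2 - lamStar * u 1 := by linarith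
    have hs2 : 0 ≤ Ψ 2 0 * u 0 + Ψ 2 1 * u 1 + Ψ 2 2 * u 2 - lamStar * u 2 := by linarith
    -- adjugate entries (nonnegative)
    have ha01 : 0 ≤ Ψ 0 1 * (lamStar - Ψ 2 2) + Ψ 0 2 * Ψ 2 1 :=
      add_nonneg (mul_nonneg (h_nonneg 0 1) hp2.le)
        (mul_nonneg (h_nonneg 0 2) (h_nonneg 2 1))
    have ha02 : 0 ≤ Ψ 0 1 * Ψ 1 2 + Ψ 0 2 * (lamStar - Ψ 1 1) :=
      add_nonneg (mul_nonneg (h_nonneg 0 1) (h_nonneg 1 2))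
        (mul_nonneg (h_nonneg 0 2) hp1.le)
    have ha10 : 0 ≤ Ψ 1 0 * (lamStar - Ψ 2 2) + Ψ 1 2 * Ψ 2 0 :=
      add_nonneg (mul_nonneg (h_nonneg 1 0) hp2.le)
        (mul_nonneg (h_nonneg 1 2) (h_nonneg 2 0))
    have ha12 : 0 ≤ Ψ 1 0 * Ψ 0 2 + Ψ 1 2 * (lamStar - Ψ 0 0) :=
      add_nonneg (mul_nonneg (h_nonneg 1 0) (h_nonneg 0 2))
        (mul_nonneg (h_nonneg 1 2) hp0.le)
    have ha20 : 0 ≤ Ψ 2 0 * (lamStar - Ψ 1 1) + Ψ 2 1 * Ψ 1 0 :=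
      add_nonneg (mul_nonneg (h_nonneg 2 0) hp1.le)
        (mul_nonneg (h_nonneg 2 1) (h_nonneg 1 0))
    have ha21 : 0 ≤ (lamStar - Ψ 0 0) * Ψ 2 1 + Ψ 0 1 * Ψ 2 0 :=
      add_nonneg (mul_nonneg hp0.le (h_nonneg 2 1))
        (mul_nonneg (h_nonneg 0 1) (h_nonneg 2 0))
    -- Cramer-type identities force u = 0
    have key0 : Ψ.charpoly.eval lamStar * u 0 =
        -(((lamStar - Ψ 1 1) * (lamStar - Ψ 2 2) - Ψ 1 2 * Ψ 2 1) *
            (Ψ 0 0 * u 0 + Ψ 0 1 * u 1 + Ψ 0 2 * u 2 - lamStar * u 0)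
          + (Ψ 0 1 * (lamStar - Ψ 2 2) + Ψ 0 2 * Ψ 2 1) *
            (Ψ 1 0 * u 0 + Ψ 1 1 * u 1 + Ψ 1 2 * u 2 - lamStar * u 1)
          + (Ψ 0 1 * Ψ 1 2 + Ψ 0 2 * (lamStar - Ψ 1 1)) *
            (Ψ 2 0 * u 0 + Ψ 2 1 * u 1 + Ψ 2 2 * u 2 - lamStar * u 2)) := by
      rw [hE]; ring
    have key1 : Ψ.charpoly.eval lamStar * u 1 =
        -((Ψ 1 0 * (lamStar - Ψ 2 2) + Ψ 1 2 * Ψ 2 0) *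
            (Ψ 0 0 * u 0 + Ψ 0 1 * u 1 + Ψ 0 2 * u 2 - lamStar * u 0)
          + ((lamStar - Ψ 0 0) * (lamStar - Ψ 2 2) - Ψ 0 2 * Ψ 2 0) *
            (Ψ 1 0 * u 0 + Ψ 1 1 * u 1 + Ψ 1 2 * u 2 - lamStar * u 1)
          + (Ψ 1 0 * Ψ 0 2 + Ψ 1 2 * (lamStar - Ψ 0 0)) *
            (Ψ 2 0 * u 0 + Ψ 2 1 * u 1 + Ψ 2 2 * u 2 - lamStar * u 2)) := by
      rw [hE]; ring
    have key2 : Ψ.charpoly.eval lamStar * u 2 =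
        -((Ψ 2 0 * (lamStar - Ψ 1 1) + Ψ 2 1 * Ψ 1 0) *
            (Ψ 0 0 * u 0 + Ψ 0 1 * u 1 + Ψ 0 2 * u 2 - lamStar * u 0)
          + ((lamStar - Ψ 0 0) * Ψ 2 1 + Ψ 0 1 * Ψ 2 0) *
            (Ψ 1 0 * u 0 + Ψ 1 1 * u 1 + Ψ 1 2 * u 2 - lamStar * u 1)
          + ((lamStar - Ψ 0 0) * (lamStar - Ψ 1 1) - Ψ 0 1 * Ψ 1 0) *
            (Ψ 2 0 * u 0 + Ψ 2 1 * u 1 + Ψ 2 2 * u 2 - lamStar * u 2)) := by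
      rw [hE]; ring
    have hdetE := hdet
    rw [← hE] at hdetE
    have hu0 : u 0 = 0 := by
      refine le_antisymm ?_ (hun 0)
      have h1 : Ψ.charpoly.eval lamStar * u 0 ≤ Ψ.charpoly.eval lamStar * 0 := by
        rw [key0, mul_zero]
        have q0 := mul_nonneg hm0.le hs0
        have q1 := mul_nonneg ha01 hs1
        have q2 := mul_nonneg ha02 hs2
        linarith
      exact le_of_mul_le_mul_left h1 hdetE
    have hu1 : u 1 = 0 := by
      refine le_antisymm ?_ (hun 1)
      have h1 : Ψ.charpoly.eval lamStar * u 1 ≤ Ψ.charpoly.eval lamStar * 0 := by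
        rw [key1, mul_zero]
        have q0 := mul_nonneg ha10 hs0
        have q1 := mul_nonneg hm1.le hs1
        have q2 := mul_nonneg ha12 hs2
        linarith
      exact le_of_mul_le_mul_left h1 hdetE
    have hu2 : u 2 = 0 := by
      refine le_antisymm ?_ (hun 2)
      have h1 : Ψ.charpoly.eval lamStar * u 2 ≤ Ψ.charpoly.eval lamStar * 0 := by
        rw [key2, mul_zero]
        have q0 := mul_nonneg ha20 hs0
        have q1 := mul_nonneg ha21 hs1
        have q2 := mul_nonneg hm2.le hs2
        linarith
      exact le_of_mul_le_mul_left h1 hdetE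
    apply hx0
    funext i
    have hx : ∀ j : Fin 3, u j = 0 → x j = 0 := by
      intro j hj
      have : ‖x j‖ = 0 := hj
      exact norm_eq_zero.mp this
    fin_cases i
    · exact hx 0 hu0
    · exact hx 1 hu1
    · exact hx 2 hu2
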